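/- Let R = (G,Φ,Φ⁺) be a finite, faithful, complete signed groupoid set. Given x, y ∈ ₐG with Φ_x ∩ Φ_y = ∅, there exists a unique morphism y' ∈ ₐG such that: y ≤ y' in weak order, (x, w', y', z') is a square for some w', z', and for every square (x, w'', y'', z'') with y ≤ y'' one has y' ≤ y''. -/
import Mathlib


open CategoryTheory

universe u v

/-- A signed groupoid set: a groupoid `G` acting on a family of definitely involuted
sets `R a` (`a ∈ Ob G`), with involution `neg`, positive parts `pos a`, and the action
commuting with the involution. -/
structure SGS (G : Type u) [Groupoid G] (R : G → Type v) where
  neg : ∀ {a : G}, R a → R a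
  pos : ∀ a : G, Set (R a)
  act : ∀ {a b : G}, (b ⟶ a) → R b → R a
  neg_neg : ∀ {a : G} (x : R a), neg (neg x) = x
  pos_iff : ∀ {a : G} (x : R a), x ∈ pos a ↔ neg x ∉ pos a
  act_id : ∀ {a : G} (x : R a), act (𝟙 a) x = x
  act_comp : ∀ {a b c : G} (g : c ⟶ b) (f : b ⟶ a) (x : R c),
      act f (act g x) = act (g ≫ f) x
  act_neg : ∀ {a b : G} (f : b ⟶ a) (x : R b), act f (neg x) = neg (act f x)

/-- The morphisms of `G` with codomain `a`. -/
abbrev SHoms (G : Type u) [Groupoid G] (a : G) : Type _ := Σ b : G, (b ⟶ a)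

namespace SGS

variable {G : Type u} [Groupoid G] {R : G → Type v} (S : SGS G R)

/-- The inversion set of a morphism `f : b ⟶ a`: positive roots at `a` sent to
negative roots at `b` by `f⁻¹`. -/
def Phi {a b : G} (f : b ⟶ a) : Set (R a) :=
  {α | α ∈ S.pos a ∧ S.act (Groupoid.inv f) α ∉ S.pos b}

/-- The inversion set of an element of `SHoms G a`. -/
def PhiS {a : G} (g : SHoms G a) : Set (R a) := S.Phi g.2

/-- `S` is faithful if only identity morphisms have empty inversion set. -/
def Faithful : Prop :=
  ∀ ⦃a b : G⦄ (f : b ⟶ a), S.Phi f = ∅ → ∃ h : b = a, f = eqToHom h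

/-- `j` is an upper bound of `F` in the weak order at `a`. -/
def IsUB {a : G} (F : Set (SHoms G a)) (j : SHoms G a) : Prop :=
  ∀ g ∈ F, S.PhiS g ⊆ S.PhiS j

/-- `j` is a least upper bound of `F` in the weak order at `a`. -/
def IsLUBw {a : G} (F : Set (SHoms G a)) (j : SHoms G a) : Prop :=
  S.IsUB F j ∧ ∀ k : SHoms G a, S.IsUB F k → S.PhiS j ⊆ S.PhiS k

/-- `S` is complete: the weak order at every object is a complete lattice
(equivalently, every family of morphisms with a common codomain has a join). -/
def Complete : Prop := ∀ (a : G) (F : Set (SHoms G a)), ∃ j : SHoms G a, S.IsLUBw F j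

/-- `S` is finite: finitely many objects, morphisms and roots. -/
def FiniteSGS (_S : SGS G R) : Prop :=
  Finite G ∧ (∀ a b : G, Finite (a ⟶ b)) ∧ ∀ a : G, Finite (R a)

/-- A square `(x, w, y, z)`: a commuting square `xw = yz` with `x(Φ_w) = Φ_y`. -/
def Square {a b c d : G} (x : b ⟶ d) (w : a ⟶ b) (y : c ⟶ d) (z : a ⟶ c) : Prop :=
  w ≫ x = z ≫ y ∧ S.act x '' S.Phi w = S.Phi y

/-- The positive real roots at `a`: the union of all inversion sets at `a`. -/
def posRe (a : G) : Set (R a) := ⋃ g : SHoms G a, S.PhiS g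

/-- An atomic morphism: an atom of the weak order at its codomain. -/
def Atomic {a : G} (g : SHoms G a) : Prop :=
  S.PhiS g ≠ ∅ ∧ ∀ h : SHoms G a, S.PhiS h ⊆ S.PhiS g →
    S.PhiS h = ∅ ∨ S.PhiS h = S.PhiS g

/-- A simple morphism: one whose inversion set is a singleton. -/
def Simple {a b : G} (f : b ⟶ a) : Prop := ∃ α : R a, S.Phi f = {α}

/-- Interval finiteness: every interval `[1ₐ, g]` of a weak order is finite. -/
def IntervalFinite : Prop :=
  ∀ (a : G) (g : SHoms G a), {h : SHoms G a | S.PhiS h ⊆ S.PhiS g}.Finite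

/-- Preprincipal: interval finite, and the inversion set of an atomic morphism is
contained in, or disjoint from, any other inversion set at the same object. -/
def Preprincipal : Prop :=
  S.IntervalFinite ∧ ∀ (a : G) (s g : SHoms G a), S.Atomic s →
    S.PhiS s ⊆ S.PhiS g ∨ S.PhiS s ∩ S.PhiS g = ∅

/-- Antipodal: the weak order at each object has a maximum element. -/
def Antipodal : Prop :=
  ∀ a : G, ∃ ω : SHoms G a, ∀ g : SHoms G a, S.PhiS g ⊆ S.PhiS ω

end SGS


namespace SGS

variable {G : Type u} [Groupoid G] {R : G → Type v} (S : SGS G R)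

lemma inv_comp'' {a b c : G} (f : c ⟶ b) (g : b ⟶ a) :
    Groupoid.inv (f ≫ g) = Groupoid.inv g ≫ Groupoid.inv f := by
  simp [Groupoid.inv_eq_inv]

lemma inv_inv'' {a b : G} (f : b ⟶ a) : Groupoid.inv (Groupoid.inv f) = f := by
  simp [Groupoid.inv_eq_inv]

lemma act_act_inv {a b : G} (f : b ⟶ a) (α : R a) :
    S.act f (S.act (Groupoid.inv f) α) = α := by
  rw [S.act_comp, Groupoid.inv_comp, S.act_id]

lemma act_inv_act {a b : G} (f : b ⟶ a) (β : R b) :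
    S.act (Groupoid.inv f) (S.act f β) = β := by
  rw [S.act_comp, Groupoid.comp_inv, S.act_id]

lemma neg_pos_iff' {a : G} (α : R a) : S.neg α ∈ S.pos a ↔ α ∉ S.pos a := by
  rw [S.pos_iff (S.neg α), S.neg_neg]

lemma mem_Phi {a b : G} (f : b ⟶ a) (α : R a) :
    α ∈ S.Phi f ↔ α ∈ S.pos a ∧ S.act (Groupoid.inv f) α ∉ S.pos b := Iff.rfl

/-- L1: difference formula. -/
lemma Phi_comp_inv {a b d : G} (x : b ⟶ a) (g : d ⟶ a) (hsub : S.Phi x ⊆ S.Phi g) :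
    S.Phi (g ≫ Groupoid.inv x) = S.act (Groupoid.inv x) '' (S.Phi g \ S.Phi x) := by
  have hrw : ∀ β : R b, S.act (Groupoid.inv (g ≫ Groupoid.inv x)) β
      = S.act (Groupoid.inv g) (S.act x β) := by
    intro β
    rw [inv_comp'', inv_inv'', S.act_comp]
  ext β
  constructor
  · rintro ⟨hβpos, hβneg⟩
    rw [hrw] at hβneg
    have hαpos : S.act x β ∈ S.pos a := by
      by_contra hne
      have h1 : S.neg (S.act x β) ∈ S.pos a := (S.neg_pos_iff' _).mpr hne
      have h2 : S.act (Groupoid.inv x) (S.neg (S.act x β)) ∉ S.pos b := by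
        rw [S.act_neg, S.act_inv_act]
        exact (S.pos_iff β).mp hβpos
      have h3 : S.neg (S.act x β) ∈ S.Phi g := hsub ⟨h1, h2⟩
      have h4 : S.act (Groupoid.inv g) (S.neg (S.act x β)) ∉ S.pos d := h3.2
      rw [S.act_neg] at h4
      exact hβneg ((S.pos_iff _).mpr h4)
    refine ⟨S.act x β, ⟨⟨hαpos, hβneg⟩, ?_⟩, ?_⟩
    · intro hc
      exact hc.2 (by rw [S.act_inv_act]; exact hβpos)
    · rw [S.act_inv_act]
  · rintro ⟨α, ⟨hαg, hαx⟩, rfl⟩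
    have hβpos : S.act (Groupoid.inv x) α ∈ S.pos b := by
      by_contra hne
      exact hαx ⟨hαg.1, hne⟩
    refine ⟨hβpos, ?_⟩
    rw [hrw, S.act_act_inv]
    exact hαg.2

/-- L2: composition with disjointness. -/
lemma Phi_comp {a b e : G} (x : b ⟶ a) (k : e ⟶ b)
    (hpos : ∀ β ∈ S.Phi k, S.act x β ∈ S.pos a) :
    S.Phi (k ≫ x) = S.Phi x ∪ S.act x '' S.Phi k := by
  have hrw : ∀ γ : R a, S.act (Groupoid.inv (k ≫ x)) γ
      = S.act (Groupoid.inv k) (S.act (Groupoid.inv x) γ) := by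
    intro γ
    rw [inv_comp'', S.act_comp]
  ext γ
  constructor
  · rintro ⟨hγpos, hγneg⟩
    rw [hrw] at hγneg
    by_cases hγx : γ ∈ S.Phi x
    · exact Or.inl hγx
    · refine Or.inr ⟨S.act (Groupoid.inv x) γ, ⟨?_, hγneg⟩, by rw [S.act_act_inv]⟩
      by_contra hne
      exact hγx ⟨hγpos, hne⟩
  · rintro (hγx | ⟨β, hβk, rfl⟩)
    · refine ⟨hγx.1, ?_⟩
      rw [hrw]
      by_contra habs
      have hnβ : S.neg (S.act (Groupoid.inv x) γ) ∈ S.pos b := (S.neg_pos_iff' _).mpr hγx.2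
      have hmem : S.neg (S.act (Groupoid.inv x) γ) ∈ S.Phi k := by
        refine ⟨hnβ, ?_⟩
        rw [S.act_neg]
        exact (S.pos_iff _).mp habs
      have := hpos _ hmem
      rw [S.act_neg, S.act_act_inv] at this
      exact ((S.pos_iff γ).mp hγx.1) this
    · refine ⟨hpos β hβk, ?_⟩
      rw [hrw, S.act_inv_act]
      exact hβk.2

/-- Faithfulness: equal inversion sets imply equal elements of `SHoms`. -/
lemma eq_of_Phi_eq (hfa : S.Faithful) {a d e : G} (fu : d ⟶ a) (fv : e ⟶ a)
    (h : S.Phi fu = S.Phi fv) : (⟨d, fu⟩ : SHoms G a) = ⟨e, fv⟩ := by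
  have hempty : S.Phi (fu ≫ Groupoid.inv fv) = ∅ := by
    ext β
    simp only [Set.mem_empty_iff_false, iff_false]
    rintro ⟨hβpos, hβneg⟩
    have hrw : S.act (Groupoid.inv (fu ≫ Groupoid.inv fv)) β
        = S.act (Groupoid.inv fu) (S.act fv β) := by
      rw [inv_comp'', inv_inv'', S.act_comp]
    rw [hrw] at hβneg
    by_cases hα : S.act fv β ∈ S.pos a
    · have h1 : S.act fv β ∉ S.Phi fv := by
        intro hc
        apply hc.2
        rw [S.act_inv_act]
        exact hβpos
      rw [← h] at h1
      exact hβneg (by by_contra hne; exact h1 ⟨hα, hne⟩)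
    · have h1 : S.neg (S.act fv β) ∈ S.pos a := (S.neg_pos_iff' _).mpr hα
      have h2 : S.neg (S.act fv β) ∈ S.Phi fv := by
        refine ⟨h1, ?_⟩
        rw [S.act_neg, S.act_inv_act]
        exact (S.pos_iff β).mp hβpos
      rw [← h] at h2
      have h3 := h2.2
      rw [S.act_neg] at h3
      exact hβneg ((S.pos_iff _).mpr h3)
  obtain ⟨hde, ht⟩ := hfa _ hempty
  subst hde
  have hfufv : fu = fv := by
    have h2 := congrArg (fun q => q ≫ fv) ht
    simpa [Category.assoc, Groupoid.inv_comp] using h2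
  rw [hfufv]

/-- binary joins from completeness. -/
lemma join_pair (hcomp : S.Complete) {a : G} (p q : SHoms G a) :
    ∃ j : SHoms G a, S.Phi p.2 ⊆ S.Phi j.2 ∧ S.Phi q.2 ⊆ S.Phi j.2 ∧
      ∀ k : SHoms G a, S.Phi p.2 ⊆ S.Phi k.2 → S.Phi q.2 ⊆ S.Phi k.2 →
        S.Phi j.2 ⊆ S.Phi k.2 := by
  obtain ⟨j, hub, hlub⟩ := hcomp a {p, q}
  refine ⟨j, hub p (by simp), hub q (by simp), fun k hp hq => hlub k ?_⟩
  intro g hg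
  rcases hg with rfl | rfl
  · exact hp
  · exact hq


/-- The key iteration lemma: starting from `m ≥ y` orthogonal to `x` and below every
square completion, either `m` itself completes a square with `x`, or we can strictly
enlarge it, staying below every square completion. -/
lemma key (hfin : S.FiniteSGS) (hcomp : S.Complete)
    {a b c : G} (x : b ⟶ a) (y : c ⟶ a) :
    ∀ (n : ℕ) (m : SHoms G a),
      (∀ α ∈ S.Phi m.2, α ∉ S.Phi x) →
      S.Phi y ⊆ S.Phi m.2 →
      (∀ (a'' c'' : G) (w'' : a'' ⟶ b) (y'' : c'' ⟶ a) (z'' : a'' ⟶ c''),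
        S.Square x w'' y'' z'' → S.Phi y ⊆ S.Phi y'' → S.Phi m.2 ⊆ S.Phi y'') →
      ((Set.univ : Set (R a)).ncard + 1 ≤ (S.Phi m.2).ncard + n) →
      ∃ y' : SHoms G a,
        S.Phi y ⊆ S.PhiS y' ∧
        (∃ (a' : G) (w' : a' ⟶ b) (z' : a' ⟶ y'.1), S.Square x w' y'.2 z') ∧
        (∀ (a'' c'' : G) (w'' : a'' ⟶ b) (y'' : c'' ⟶ a) (z'' : a'' ⟶ c''),
          S.Square x w'' y'' z'' → S.Phi y ⊆ S.Phi y'' → S.PhiS y' ⊆ S.Phi y'') := by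
  haveI : Finite (R a) := hfin.2.2 a
  intro n
  induction n with
  | zero =>
    intro m _ _ _ hcard
    exfalso
    have h1 : (S.Phi m.2).ncard ≤ (Set.univ : Set (R a)).ncard :=
      Set.ncard_le_ncard (Set.subset_univ _) Set.finite_univ
    omega
  | succ n ih =>
    intro m hdisj hym hmin hcard
    obtain ⟨g, hxg, hmg, hglub⟩ := S.join_pair hcomp ⟨b, x⟩ m
    have hΦe : S.Phi (g.2 ≫ Groupoid.inv x)
        = S.act (Groupoid.inv x) '' (S.Phi g.2 \ S.Phi x) :=
      S.Phi_comp_inv x g.2 hxg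
    obtain ⟨h, hinvh, heh, hhlub⟩ :=
      S.join_pair hcomp ⟨a, Groupoid.inv x⟩ ⟨g.1, g.2 ≫ Groupoid.inv x⟩
    have hΦp : S.Phi (h.2 ≫ x)
        = S.act x '' (S.Phi h.2 \ S.Phi (Groupoid.inv x)) := by
      have h0 := S.Phi_comp_inv (Groupoid.inv x) h.2 hinvh
      rwa [inv_inv''] at h0
    have hedisj : ∀ β ∈ S.Phi (g.2 ≫ Groupoid.inv x), β ∉ S.Phi (Groupoid.inv x) := by
      intro β hβ hc
      rw [hΦe] at hβ
      obtain ⟨α, hα, rfl⟩ := hβ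
      apply hc.2
      rw [inv_inv'', S.act_act_inv]
      exact hα.1.1
    have hmp : S.Phi m.2 ⊆ S.Phi (h.2 ≫ x) := by
      intro α hα
      have hαg : α ∈ S.Phi g.2 := hmg hα
      have hαx : α ∉ S.Phi x := hdisj α hα
      have hβe : S.act (Groupoid.inv x) α ∈ S.Phi (g.2 ≫ Groupoid.inv x) := by
        rw [hΦe]; exact ⟨α, ⟨hαg, hαx⟩, rfl⟩
      have hβi : S.act (Groupoid.inv x) α ∉ S.Phi (Groupoid.inv x) := hedisj _ hβe
      rw [hΦp]
      exact ⟨_, ⟨heh hβe, hβi⟩, S.act_act_inv x α⟩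
    have hpdisj : ∀ γ ∈ S.Phi (h.2 ≫ x), γ ∉ S.Phi x := by
      intro γ hγ hc
      rw [hΦp] at hγ
      obtain ⟨β, ⟨hβh, _⟩, rfl⟩ := hγ
      apply hc.2
      rw [S.act_inv_act]
      exact hβh.1
    have hpmin : ∀ (a'' c'' : G) (w'' : a'' ⟶ b) (y'' : c'' ⟶ a) (z'' : a'' ⟶ c''),
        S.Square x w'' y'' z'' → S.Phi y ⊆ S.Phi y'' → S.Phi (h.2 ≫ x) ⊆ S.Phi y'' := by
      intro a'' c'' w'' y'' z'' hsq hyy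
      have hmy : S.Phi m.2 ⊆ S.Phi y'' := hmin _ _ _ _ _ hsq hyy
      have hacts : S.act x '' S.Phi w'' = S.Phi y'' := hsq.2
      have hposw : ∀ β ∈ S.Phi w'', S.act x β ∈ S.pos a := by
        intro β hβ
        have hmem : S.act x β ∈ S.Phi y'' := hacts ▸ ⟨β, hβ, rfl⟩
        exact hmem.1
      have hG : S.Phi (w'' ≫ x) = S.Phi x ∪ S.Phi y'' := by
        rw [S.Phi_comp x w'' hposw, hacts]
      have hgG : S.Phi g.2 ⊆ S.Phi (w'' ≫ x) := by
        refine hglub ⟨a'', w'' ≫ x⟩ ?_ ?_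
        · rw [hG]; exact Set.subset_union_left
        · rw [hG]; exact hmy.trans Set.subset_union_right
      have hy''pos : ∀ α ∈ S.Phi y'', S.act (Groupoid.inv x) α ∈ S.pos b := by
        intro α hα
        rw [← hacts] at hα
        obtain ⟨β, hβ, rfl⟩ := hα
        rw [S.act_inv_act]
        exact hβ.1
      have hz : S.Phi (y'' ≫ Groupoid.inv x)
          = S.Phi (Groupoid.inv x) ∪ S.act (Groupoid.inv x) '' S.Phi y'' :=
        S.Phi_comp (Groupoid.inv x) y'' hy''pos
      have hhz : S.Phi h.2 ⊆ S.Phi (y'' ≫ Groupoid.inv x) := by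
        refine hhlub ⟨c'', y'' ≫ Groupoid.inv x⟩ ?_ ?_
        · rw [hz]; exact Set.subset_union_left
        · rw [hz]
          intro β hβ
          rw [hΦe] at hβ
          obtain ⟨α, hα, rfl⟩ := hβ
          have hαG : α ∈ S.Phi (w'' ≫ x) := hgG hα.1
          rw [hG] at hαG
          rcases hαG with h1 | h1
          · exact absurd h1 hα.2
          · exact Or.inr ⟨α, h1, rfl⟩
      intro γ hγ
      rw [hΦp] at hγ
      obtain ⟨β, ⟨hβh, hβni⟩, rfl⟩ := hγ
      have hβz := hhz hβh
      rw [hz] at hβz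
      rcases hβz with h1 | ⟨α, hα, rfl⟩
      · exact absurd h1 hβni
      · rw [S.act_act_inv]; exact hα
    by_cases hle : (S.Phi (h.2 ≫ x)).ncard ≤ (S.Phi m.2).ncard
    · have heq : S.Phi m.2 = S.Phi (h.2 ≫ x) :=
        Set.eq_of_subset_of_ncard_le hmp hle (Set.toFinite _)
      have hesub : S.Phi (g.2 ≫ Groupoid.inv x) ⊆ S.Phi h.2 \ S.Phi (Groupoid.inv x) :=
        fun β hβ => ⟨heh hβ, hedisj β hβ⟩
      have hgsub : S.Phi g.2 \ S.Phi x ⊆ S.Phi m.2 := by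
        intro α hα
        have h1 : S.act (Groupoid.inv x) α ∈ S.Phi (g.2 ≫ Groupoid.inv x) := by
          rw [hΦe]; exact ⟨α, hα, rfl⟩
        have h2 : S.act x (S.act (Groupoid.inv x) α) ∈ S.Phi (h.2 ≫ x) := by
          rw [hΦp]; exact ⟨_, hesub h1, rfl⟩
        rw [S.act_act_inv] at h2
        rw [heq]
        exact h2
      have hgeq : S.Phi g.2 \ S.Phi x = S.Phi m.2 := by
        apply Set.Subset.antisymm hgsub
        intro α hα
        exact ⟨hmg hα, hdisj α hα⟩
      refine ⟨m, hym, ⟨g.1, g.2 ≫ Groupoid.inv x, g.2 ≫ Groupoid.inv m.2, ?_, ?_⟩, hmin⟩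
      · simp only [Category.assoc, Groupoid.inv_comp, Category.comp_id]
      · rw [hΦe, hgeq, Set.image_image]
        exact (Set.image_congr fun α _ => S.act_act_inv x α).trans (Set.image_id _)
    · push_neg at hle
      refine ih ⟨h.1, h.2 ≫ x⟩ hpdisj (hym.trans hmp) hpmin ?_
      show (Set.univ : Set (R a)).ncard + 1 ≤ (S.Phi (h.2 ≫ x)).ncard + n
      omega

end SGS


/-- in a finite, faithful, complete signed groupoid set, given
`x, y ∈ ₐG` with `Φ_x ∩ Φ_y = ∅`, there is a unique `y' ∈ ₐG` with `y ≤ y'`,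
forming a square `(x, w', y', z')`, and minimal with these properties. -/
theorem stmt_11 {G : Type u} [Groupoid G] {R : G → Type v} (S : SGS G R)
    (hfin : S.FiniteSGS) (hfa : S.Faithful) (hcomp : S.Complete)
    {a b c : G} (x : b ⟶ a) (y : c ⟶ a) (hxy : S.Phi x ∩ S.Phi y = ∅) :
    ∃! y' : SHoms G a,
      S.Phi y ⊆ S.PhiS y' ∧
      (∃ (a' : G) (w' : a' ⟶ b) (z' : a' ⟶ y'.1), S.Square x w' y'.2 z') ∧
      (∀ (a'' c'' : G) (w'' : a'' ⟶ b) (y'' : c'' ⟶ a) (z'' : a'' ⟶ c''),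
        S.Square x w'' y'' z'' → S.Phi y ⊆ S.Phi y'' → S.PhiS y' ⊆ S.Phi y'') := by
  obtain ⟨y', h1, h2, h3⟩ :=
    S.key hfin hcomp x y ((Set.univ : Set (R a)).ncard + 1) ⟨c, y⟩
      (fun α hα hax => (Set.eq_empty_iff_forall_notMem.mp hxy α) ⟨hax, hα⟩)
      subset_rfl
      (fun _ _ _ _ _ _ hyy => hyy)
      (by omega)
  refine ⟨y', ⟨h1, h2, h3⟩, ?_⟩
  rintro y₂ ⟨k1, ⟨a2, w2, z2, hsq2⟩, k3⟩
  obtain ⟨a1, w1, z1, hsq1⟩ := h2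
  have hsub1 : S.PhiS y₂ ⊆ S.PhiS y' := k3 a1 y'.1 w1 y'.2 z1 hsq1 h1
  have hsub2 : S.PhiS y' ⊆ S.PhiS y₂ := h3 a2 y₂.1 w2 y₂.2 z2 hsq2 k1
  have hE := S.eq_of_Phi_eq hfa y₂.2 y'.2 (Set.Subset.antisymm hsub1 hsub2)
  simpa using hE
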